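/- The function η₂(z) = (4/3) ln(1+|z|²) · (1-|z|²)/(1+|z|²) + 8/(3(1+|z|²)) satisfies Δη₂ + 8/(1+|z|²)² · η₂ = 16(1-|z|²)/(1+|z|²)³ on ℝ². -/

import Mathlib

open Real

noncomputable abbrev E2 : Type := EuclideanSpace ℝ (Fin 2)

/-- Euclidean Laplacian on ℝ² via second directional derivatives along the
coordinate directions. -/
noncomputable def lap (f : E2 → ℝ) (x : E2) : ℝ :=
  ∑ i : Fin 2, iteratedDeriv 2 (fun t : ℝ => f (x + t • EuclideanSpace.single i 1)) 0

noncomputable def gfun (s : ℝ) : ℝ :=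
  (4 / 3) * Real.log (1 + s) * ((1 - s) / (1 + s)) + 8 / (3 * (1 + s))

noncomputable def g1 (s : ℝ) : ℝ :=
  -8 * Real.log (1 + s) / (3 * (1 + s) ^ 2) - 4 / (3 * (1 + s))

noncomputable def g2 (s : ℝ) : ℝ :=
  -8 * (1 - 2 * Real.log (1 + s)) / (3 * (1 + s) ^ 3) + 4 / (3 * (1 + s) ^ 2)

lemma hg_deriv {s : ℝ} (hs : 0 < 1 + s) : HasDerivAt gfun (g1 s) s := by
  have h0 : (1 + s) ≠ 0 := ne_of_gt hs
  have hlog : HasDerivAt (fun u : ℝ => Real.log (1 + u)) (1 / (1 + s)) s := by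
    simpa [Function.comp_def] using (Real.hasDerivAt_log h0).comp s ((hasDerivAt_id s).const_add 1)
  have hden : HasDerivAt (fun u : ℝ => (1 - u) / (1 + u))
      ((-1 * (1 + s) - (1 - s) * 1) / (1 + s) ^ 2) s := by
    exact (((hasDerivAt_id s).const_sub 1)).div ((hasDerivAt_id s).const_add 1) h0
  have hinv : HasDerivAt (fun u : ℝ => 8 / (3 * (1 + u)))
      ((0 * (3 * (1 + s)) - 8 * 3) / (3 * (1 + s)) ^ 2) s := by
    refine (hasDerivAt_const s (8:ℝ)).div ?_ (by positivity)
    simpa using ((hasDerivAt_id s).const_add 1).const_mul (3:ℝ)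
  have := ((hlog.const_mul (4/3 : ℝ)).mul hden).add hinv
  refine this.congr_deriv ?_
  unfold g1
  field_simp
  ring

lemma hg1_deriv {s : ℝ} (hs : 0 < 1 + s) : HasDerivAt g1 (g2 s) s := by
  have h0 : (1 + s) ≠ 0 := ne_of_gt hs
  have hlog : HasDerivAt (fun u : ℝ => Real.log (1 + u)) (1 / (1 + s)) s := by
    simpa [Function.comp_def] using (Real.hasDerivAt_log h0).comp s ((hasDerivAt_id s).const_add 1)
  have hA : HasDerivAt (fun u : ℝ => -8 * Real.log (1 + u) / (3 * (1 + u) ^ 2))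
      (((-8 * (1 / (1 + s))) * (3 * (1 + s) ^ 2)
          - (-8 * Real.log (1 + s)) * (3 * (2 * (1 + s))))
        / (3 * (1 + s) ^ 2) ^ 2) s := by
    refine HasDerivAt.div (hlog.const_mul (-8 : ℝ)) ?_ (by positivity)
    have : HasDerivAt (fun u : ℝ => (1 + u) ^ 2) (2 * (1 + s) ^ 1 * 1) s :=
      (((hasDerivAt_id s).const_add 1)).pow 2
    simpa [mul_comm, mul_assoc, mul_left_comm] using this.const_mul (3 : ℝ)
  have hB : HasDerivAt (fun u : ℝ => 4 / (3 * (1 + u)))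
      ((0 * (3 * (1 + s)) - 4 * 3) / (3 * (1 + s)) ^ 2) s := by
    refine (hasDerivAt_const s (4:ℝ)).div ?_ (by positivity)
    simpa using ((hasDerivAt_id s).const_add 1).const_mul (3:ℝ)
  have := hA.sub hB
  refine this.congr_deriv ?_
  unfold g2
  field_simp
  ring

/-- Second derivative of t ↦ g(c + 2at + t²) at 0, given a² ≤ c. -/
lemma key (a c : ℝ) (ha : a ^ 2 ≤ c) :
    iteratedDeriv 2 (fun t : ℝ => gfun (c + 2 * a * t + t ^ 2)) 0
      = 4 * a ^ 2 * g2 c + 2 * g1 c := by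
  have hq : ∀ t : ℝ, 0 < 1 + (c + 2 * a * t + t ^ 2) := by
    intro t; nlinarith [sq_nonneg (t + a)]
  have hqd : ∀ t : ℝ, HasDerivAt (fun u : ℝ => c + 2 * a * u + u ^ 2) (2 * a + 2 * t) t := by
    intro t
    have h1 : HasDerivAt (fun u : ℝ => c + 2 * a * u) (2 * a) t := by
      simpa using ((hasDerivAt_id t).const_mul (2 * a)).const_add c
    have h2 : HasDerivAt (fun u : ℝ => u ^ 2) (2 * t) t := by
      simpa using hasDerivAt_pow 2 t
    exact h1.add h2
  have hderiv : (deriv fun t : ℝ => gfun (c + 2 * a * t + t ^ 2))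
      = fun t : ℝ => g1 (c + 2 * a * t + t ^ 2) * (2 * a + 2 * t) := by
    funext t
    exact ((hg_deriv (hq t)).comp t (hqd t)).deriv
  have h2 : HasDerivAt (fun t : ℝ => g1 (c + 2 * a * t + t ^ 2) * (2 * a + 2 * t))
      (g2 (c + 2 * a * 0 + 0 ^ 2) * (2 * a + 2 * 0) * (2 * a + 2 * 0)
        + g1 (c + 2 * a * 0 + 0 ^ 2) * 2) 0 := by
    refine HasDerivAt.mul (by exact (hg1_deriv (hq 0)).comp 0 (hqd 0)) ?_
    simpa using ((hasDerivAt_id (0:ℝ)).const_mul 2).const_add (2 * a)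
  rw [iteratedDeriv_succ, iteratedDeriv_one, hderiv, h2.deriv]
  simp
  ring

theorem eta2_equation :
    ∀ z : E2,
      lap (fun z =>
          (4 / 3) * Real.log (1 + ‖z‖ ^ 2) * ((1 - ‖z‖ ^ 2) / (1 + ‖z‖ ^ 2))
            + 8 / (3 * (1 + ‖z‖ ^ 2))) z
        + 8 / (1 + ‖z‖ ^ 2) ^ 2 *
            ((4 / 3) * Real.log (1 + ‖z‖ ^ 2) * ((1 - ‖z‖ ^ 2) / (1 + ‖z‖ ^ 2))
              + 8 / (3 * (1 + ‖z‖ ^ 2)))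
        = 16 * (1 - ‖z‖ ^ 2) / (1 + ‖z‖ ^ 2) ^ 3 := by
  intro z
  set c := ‖z‖ ^ 2 with hc
  have hnorm : ∀ (i : Fin 2) (t : ℝ),
      ‖z + t • EuclideanSpace.single i (1:ℝ)‖ ^ 2 = c + 2 * (z i) * t + t ^ 2 := by
    intro i t
    rw [norm_add_sq_real]
    have h1 : (inner ℝ z (t • EuclideanSpace.single i (1:ℝ)) : ℝ) = t * z i := by
      rw [real_inner_smul_right]
      simp [EuclideanSpace.inner_single_right]
    have h2 : ‖t • EuclideanSpace.single i (1:ℝ)‖ ^ 2 = t ^ 2 := by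
      rw [norm_smul]; simp [abs_mul_abs_self, sq_abs]
    rw [h1, h2]; ring
  have hsum : ∑ i : Fin 2, (z i) ^ 2 = c := by
    rw [hc, EuclideanSpace.norm_eq]
    rw [Real.sq_sqrt (by positivity)]
    simp [sq_abs]
  have hlap : lap (fun z =>
      (4 / 3) * Real.log (1 + ‖z‖ ^ 2) * ((1 - ‖z‖ ^ 2) / (1 + ‖z‖ ^ 2))
        + 8 / (3 * (1 + ‖z‖ ^ 2))) z
      = ∑ i : Fin 2, (4 * (z i) ^ 2 * g2 c + 2 * g1 c) := by
    unfold lap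
    refine Finset.sum_congr rfl fun i _ => ?_
    have hfun : (fun t : ℝ =>
        (4 / 3) * Real.log (1 + ‖z + t • EuclideanSpace.single i (1:ℝ)‖ ^ 2) *
          ((1 - ‖z + t • EuclideanSpace.single i (1:ℝ)‖ ^ 2) /
            (1 + ‖z + t • EuclideanSpace.single i (1:ℝ)‖ ^ 2))
          + 8 / (3 * (1 + ‖z + t • EuclideanSpace.single i (1:ℝ)‖ ^ 2)))
        = fun t : ℝ => gfun (c + 2 * (z i) * t + t ^ 2) := by
      funext t; rw [gfun, hnorm i t]
    rw [hfun]
    refine key (z i) c ?_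
    have h1 : (z i) ^ 2 ≤ ∑ j : Fin 2, (z j) ^ 2 :=
      Finset.single_le_sum (fun j _ => sq_nonneg (z j)) (Finset.mem_univ i)
    calc (z i) ^ 2 ≤ ∑ j : Fin 2, (z j) ^ 2 := h1
      _ = c := hsum
  have h1c : (1 + c) ≠ 0 := by positivity
  rw [hlap]
  have hsum2 : z 0 ^ 2 + z 1 ^ 2 = c := by rw [← hsum, Fin.sum_univ_two]
  have hS : ∑ i : Fin 2, (4 * (z i) ^ 2 * g2 c + 2 * g1 c) = 4 * c * g2 c + 4 * g1 c := by
    rw [Fin.sum_univ_two]; linear_combination 4 * g2 c * hsum2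
  rw [hS]
  unfold g1 g2
  field_simp
  ring
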